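/- Let (Ω, (𝓕ₖ)ₖ, P) be a filtered probability space and (Fₖ)_{k=0}^n an integrable martingale with differences ΔFₖ = Fₖ − F_{k−1}. Then E[(∑_{k=1}^n (E[|ΔFₖ| | 𝓕_{k−1}])²)^{1/2}] ≤ 2 E[(∑_{k=1}^n |ΔFₖ|²)^{1/2}]. -/

import Mathlib

open MeasureTheory

section Aux

private lemma sqrt_helper {A B C D : ℝ} (hA : 0 ≤ A) (hB : 0 ≤ B) (hC : 0 ≤ C) (hD : 0 ≤ D)
    (hsum : A ^ 2 + B ^ 2 ≤ C ^ 2 + D ^ 2) (hprod : A * B ≤ C * D) : A + B ≤ C + D := by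
  have h1 : (A + B) ^ 2 ≤ (C + D) ^ 2 := by nlinarith
  calc A + B = Real.sqrt ((A + B) ^ 2) := (Real.sqrt_sq (by positivity)).symm
    _ ≤ Real.sqrt ((C + D) ^ 2) := Real.sqrt_le_sqrt h1
    _ = C + D := Real.sqrt_sq (by positivity)

private lemma Lsub {s x y : ℝ} (hs : 0 ≤ s) (hx : 0 ≤ x) (hy : 0 ≤ y) :
    Real.sqrt (s + x + y) + Real.sqrt s ≤ Real.sqrt (s + x) + Real.sqrt (s + y) := by
  refine sqrt_helper (Real.sqrt_nonneg _) (Real.sqrt_nonneg _) (Real.sqrt_nonneg _)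
    (Real.sqrt_nonneg _) ?_ ?_
  · rw [Real.sq_sqrt (by linarith), Real.sq_sqrt hs, Real.sq_sqrt (by linarith),
      Real.sq_sqrt (by linarith)]
    linarith
  · rw [← Real.sqrt_mul (by linarith), ← Real.sqrt_mul (by linarith)]
    exact Real.sqrt_le_sqrt (by nlinarith)

private lemma Lshift {b s x : ℝ} (hb : 0 ≤ b) (hbs : b ≤ s) (hx : 0 ≤ x) :
    Real.sqrt (s + x) + Real.sqrt b ≤ Real.sqrt s + Real.sqrt (b + x) := by
  refine sqrt_helper (Real.sqrt_nonneg _) (Real.sqrt_nonneg _) (Real.sqrt_nonneg _)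
    (Real.sqrt_nonneg _) ?_ ?_
  · rw [Real.sq_sqrt (by linarith), Real.sq_sqrt hb, Real.sq_sqrt (by linarith),
      Real.sq_sqrt (by linarith)]
    linarith
  · rw [← Real.sqrt_mul (by linarith), ← Real.sqrt_mul (by linarith)]
    exact Real.sqrt_le_sqrt (by nlinarith)

private lemma sqrt_add_le' {x y : ℝ} (hx : 0 ≤ x) (hy : 0 ≤ y) :
    Real.sqrt (x + y) ≤ Real.sqrt x + Real.sqrt y := by
  have h := sqrt_helper (A := Real.sqrt (x + y)) (B := 0) (C := Real.sqrt x) (D := Real.sqrt y)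
    (Real.sqrt_nonneg _) le_rfl (Real.sqrt_nonneg _) (Real.sqrt_nonneg _) ?_ ?_
  · linarith
  · rw [Real.sq_sqrt (by linarith), Real.sq_sqrt hx, Real.sq_sqrt hy]; norm_num
  · have := mul_nonneg (Real.sqrt_nonneg x) (Real.sqrt_nonneg y); linarith

private lemma tangent_pw {b g x : ℝ} (hb : 0 ≤ b) :
    Real.sqrt (b + g ^ 2) + g / Real.sqrt (b + g ^ 2) * (x - g) ≤ Real.sqrt (b + x ^ 2) := by
  have hφ0 : 0 ≤ Real.sqrt (b + g ^ 2) := Real.sqrt_nonneg _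
  have hφsq : Real.sqrt (b + g ^ 2) ^ 2 = b + g ^ 2 := Real.sq_sqrt (by positivity)
  rcases eq_or_lt_of_le hφ0 with h0 | hpos
  · have hbg : b + g ^ 2 = 0 := by rw [← hφsq, ← h0]; ring
    have hg0 : g = 0 := by nlinarith [sq_nonneg g]
    have hb0 : b = 0 := by nlinarith [sq_nonneg g]
    have heq : Real.sqrt (b + g ^ 2) + g / Real.sqrt (b + g ^ 2) * (x - g) = 0 := by
      rw [hg0, hb0]; simp
    rw [heq]; positivity
  · have key : b + g * x ≤ Real.sqrt (b + g ^ 2) * Real.sqrt (b + x ^ 2) := by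
      rw [← Real.sqrt_mul (by positivity)]
      rcases le_or_gt (b + g * x) 0 with h | h
      · exact h.trans (Real.sqrt_nonneg _)
      · have hsq : (b + g * x) ^ 2 ≤ (b + g ^ 2) * (b + x ^ 2) := by nlinarith [sq_nonneg (x - g)]
        calc b + g * x = Real.sqrt ((b + g * x) ^ 2) := (Real.sqrt_sq h.le).symm
          _ ≤ _ := Real.sqrt_le_sqrt hsq
    have heq : Real.sqrt (b + g ^ 2) + g / Real.sqrt (b + g ^ 2) * (x - g)
        = (b + g * x) / Real.sqrt (b + g ^ 2) := by
      field_simp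
      nlinarith [hφsq]
    rw [heq, div_le_iff₀ hpos]
    nlinarith [key]

private lemma sqrt_finset_sum_le {ι : Type*} (s : Finset ι) (u : ι → ℝ) :
    (∀ j ∈ s, 0 ≤ u j) → Real.sqrt (∑ j ∈ s, u j) ≤ ∑ j ∈ s, Real.sqrt (u j) := by
  classical
  induction s using Finset.cons_induction with
  | empty => intro _; simp
  | cons a s ha ih =>
    intro hu
    rw [Finset.sum_cons, Finset.sum_cons]
    have h1 := sqrt_add_le' (hu a (Finset.mem_cons_self a s))
      (Finset.sum_nonneg fun j hj => hu j (Finset.mem_cons_of_mem hj))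
    have h2 := ih fun j hj => hu j (Finset.mem_cons_of_mem hj)
    linarith

private def S2 {Ω : Type*} (h : ℕ → Ω → ℝ) (k : ℕ) (ω : Ω) : ℝ :=
  ∑ j ∈ Finset.Icc 1 k, h j ω ^ 2

private lemma S2_succ {Ω : Type*} (h : ℕ → Ω → ℝ) (k : ℕ) (ω : Ω) :
    S2 h (k + 1) ω = S2 h k ω + h (k + 1) ω ^ 2 := by
  rw [S2, S2, ← Finset.insert_Icc_right_eq_Icc_add_one (by omega), Finset.sum_insert (by simp)]
  ring

private lemma S2_nonneg {Ω : Type*} (h : ℕ → Ω → ℝ) (k : ℕ) (ω : Ω) : 0 ≤ S2 h k ω :=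
  Finset.sum_nonneg fun _ _ => sq_nonneg _

private lemma aux {Ω : Type*} {m0 : MeasurableSpace Ω} (μ : Measure Ω) [IsProbabilityMeasure μ]
    (ℱ : ℕ → MeasurableSpace Ω) (hle : ∀ k, ℱ k ≤ m0) (hmono : Monotone ℱ)
    (d : ℕ → Ω → ℝ) (hd_meas : ∀ k, StronglyMeasurable[ℱ k] (d k))
    (hd_int : ∀ k, Integrable (d k) μ) (n : ℕ) :
    (∫ ω, Real.sqrt (S2 (fun k => μ[d k | ℱ (k - 1)]) n ω) ∂μ)
      ≤ 2 * ∫ ω, Real.sqrt (S2 d n ω) ∂μ := by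
  set g : ℕ → Ω → ℝ := fun k => μ[d k | ℱ (k - 1)] with hgdef
  have hgm : ∀ k, Measurable[m0] (g k) := fun k =>
    ((stronglyMeasurable_condExp (m := ℱ (k - 1))).mono (hle (k - 1))).measurable
  have hdm : ∀ k, Measurable[m0] (d k) := fun k => ((hd_meas k).mono (hle k)).measurable
  have hgi : ∀ k, Integrable (g k) μ := fun _ => integrable_condExp
  have hS2m : ∀ (h : ℕ → Ω → ℝ), (∀ k, Measurable[m0] (h k)) → ∀ k, Measurable[m0] (S2 h k) :=
    fun h hh k => Finset.measurable_sum _ fun j _ => (hh j).pow_const 2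
  have hGint : ∀ K : ℕ, Integrable (fun ω => ∑ j ∈ Finset.Icc 1 K, (|g j ω| + |d j ω|)) μ :=
    fun K => integrable_finset_sum _ fun j _ => ((hgi j).abs.add (hd_int j).abs)
  have hint_sqrt : ∀ (f : Ω → ℝ) (K : ℕ), Measurable[m0] f → (∀ ω, 0 ≤ f ω) →
      (∀ ω, f ω ≤ S2 g K ω + S2 d K ω) → Integrable (fun ω => Real.sqrt (f ω)) μ := by
    intro f K hf h0 hK
    refine (hGint K).mono' (Real.continuous_sqrt.measurable.comp hf).aestronglyMeasurable
      (ae_of_all _ fun ω => ?_)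
    rw [Real.norm_eq_abs, abs_of_nonneg (Real.sqrt_nonneg _)]
    refine (Real.sqrt_le_sqrt (hK ω)).trans ?_
    have he : S2 g K ω + S2 d K ω = ∑ j ∈ Finset.Icc 1 K, (g j ω ^ 2 + d j ω ^ 2) := by
      rw [S2, S2, ← Finset.sum_add_distrib]
    rw [he]
    refine (sqrt_finset_sum_le _ _ fun j _ => by positivity).trans ?_
    refine Finset.sum_le_sum fun j _ => ?_
    refine (sqrt_add_le' (sq_nonneg _) (sq_nonneg _)).trans ?_
    rw [Real.sqrt_sq_eq_abs, Real.sqrt_sq_eq_abs]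
  have hIgd : ∀ k, Integrable (fun ω => Real.sqrt (S2 g k ω + S2 d k ω)) μ := fun k =>
    hint_sqrt _ k ((hS2m g hgm k).add (hS2m d hdm k))
      (fun ω => add_nonneg (S2_nonneg _ _ _) (S2_nonneg _ _ _)) (fun ω => le_rfl)
  have hId : ∀ k, Integrable (fun ω => Real.sqrt (S2 d k ω)) μ := fun k =>
    hint_sqrt _ k (hS2m d hdm k) (fun ω => S2_nonneg _ _ _)
      (fun ω => le_add_of_nonneg_left (S2_nonneg _ _ _))
  have hIφ : ∀ k, Integrable (fun ω => Real.sqrt (S2 d k ω + g (k + 1) ω ^ 2)) μ := by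
    intro k
    refine hint_sqrt _ (k + 1) ((hS2m d hdm k).add ((hgm (k + 1)).pow_const 2))
      (fun ω => add_nonneg (S2_nonneg _ _ _) (sq_nonneg _)) (fun ω => ?_)
    have e1 := S2_succ g k ω
    have e2 := S2_succ d k ω
    have h1 := S2_nonneg g k ω
    have h2 := sq_nonneg (d (k + 1) ω)
    linarith
  -- tangent step
  have tangent : ∀ k, (∫ ω, Real.sqrt (S2 d k ω + g (k + 1) ω ^ 2) ∂μ)
      ≤ ∫ ω, Real.sqrt (S2 d (k + 1) ω) ∂μ := by
    intro k
    set w : Ω → ℝ := fun ω => g (k + 1) ω / Real.sqrt (S2 d k ω + g (k + 1) ω ^ 2) with hw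
    set z : Ω → ℝ := fun ω => d (k + 1) ω - g (k + 1) ω with hz
    have hgsm : StronglyMeasurable[ℱ k] (g (k + 1)) := stronglyMeasurable_condExp
    have hS2dsm : Measurable[ℱ k] (S2 d k) := by
      refine Finset.measurable_sum _ fun j hj => ?_
      have hjk : j ≤ k := (Finset.mem_Icc.mp hj).2
      exact (((hd_meas j).mono (hmono hjk)).measurable).pow_const 2
    have hwsm : StronglyMeasurable[ℱ k] w :=
      ((hgsm.measurable).div (Real.continuous_sqrt.measurable.comp
        (hS2dsm.add (hgsm.measurable.pow_const 2)))).stronglyMeasurable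
    have hwb : ∀ ω, |w ω| ≤ 1 := by
      intro ω
      have hden : |Real.sqrt (S2 d k ω + g (k + 1) ω ^ 2)|
          = Real.sqrt (S2 d k ω + g (k + 1) ω ^ 2) := abs_of_nonneg (Real.sqrt_nonneg _)
      have hnum : |g (k + 1) ω| ≤ Real.sqrt (S2 d k ω + g (k + 1) ω ^ 2) := by
        calc |g (k + 1) ω| = Real.sqrt (g (k + 1) ω ^ 2) := (Real.sqrt_sq_eq_abs _).symm
          _ ≤ _ := Real.sqrt_le_sqrt (le_add_of_nonneg_left (S2_nonneg _ _ _))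
      rw [hw]
      simp only [abs_div, hden]
      exact div_le_one_of_le₀ hnum (Real.sqrt_nonneg _)
    have hzint : Integrable z μ := (hd_int (k + 1)).sub (hgi (k + 1))
    have hwz_int : Integrable (w * z) μ := by
      refine hzint.norm.mono' ?_ (ae_of_all _ fun ω => ?_)
      · exact ((hwsm.mono (hle k)).aestronglyMeasurable.mul hzint.aestronglyMeasurable)
      · rw [Pi.mul_apply, norm_mul]
        have h1 := hwb ω
        have h2 : ‖w ω‖ = |w ω| := Real.norm_eq_abs _
        have h3 : (0:ℝ) ≤ ‖z ω‖ := norm_nonneg _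
        nlinarith [abs_nonneg (w ω)]
    have hcondz : μ[z | ℱ k] =ᵐ[μ] 0 := by
      have h1 : μ[z | ℱ k] =ᵐ[μ] μ[d (k + 1) | ℱ k] - μ[g (k + 1) | ℱ k] :=
        condExp_sub (hd_int (k + 1)) (hgi (k + 1)) _
      have h2 : μ[g (k + 1) | ℱ k] = g (k + 1) :=
        condExp_of_stronglyMeasurable (hle k) hgsm (hgi (k + 1))
      have h3 : μ[d (k + 1) | ℱ k] = g (k + 1) := rfl
      refine h1.trans ?_
      rw [h2, h3, sub_self]
    have hint0 : ∫ ω, (w * z) ω ∂μ = 0 := by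
      have h1 : μ[w * z | ℱ k] =ᵐ[μ] w * μ[z | ℱ k] :=
        condExp_mul_of_stronglyMeasurable_left hwsm hwz_int hzint
      have h2 : w * μ[z | ℱ k] =ᵐ[μ] 0 := by
        filter_upwards [hcondz] with ω hω
        simp [Pi.mul_apply, hω]
      calc ∫ ω, (w * z) ω ∂μ = ∫ ω, (μ[w * z | ℱ k]) ω ∂μ := (integral_condExp (hle k)).symm
        _ = ∫ ω, (0 : Ω → ℝ) ω ∂μ := integral_congr_ae (h1.trans h2)
        _ = 0 := by simp
    have hpt : ∀ ω, Real.sqrt (S2 d k ω + g (k + 1) ω ^ 2) + (w * z) ω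
        ≤ Real.sqrt (S2 d (k + 1) ω) := by
      intro ω
      rw [S2_succ d k ω]
      have ht := tangent_pw (b := S2 d k ω) (g := g (k + 1) ω) (x := d (k + 1) ω)
        (S2_nonneg _ _ _)
      simpa [hw, hz, Pi.mul_apply] using ht
    have hplus : Integrable
        (fun ω => Real.sqrt (S2 d k ω + g (k + 1) ω ^ 2) + (w * z) ω) μ :=
      (hIφ k).add hwz_int
    have hmono' := integral_mono hplus (hId (k + 1)) hpt
    rwa [integral_add (hIφ k) hwz_int, hint0, add_zero] at hmono'
  -- induction
  have claim : ∀ k, (∫ ω, Real.sqrt (S2 g k ω + S2 d k ω) ∂μ)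
      ≤ 2 * ∫ ω, Real.sqrt (S2 d k ω) ∂μ := by
    intro k
    induction k with
    | zero =>
      have h0 : ∀ (h : ℕ → Ω → ℝ) (ω : Ω), S2 h 0 ω = 0 := by
        intro h ω; rw [S2]; simp
      simp [h0]
    | succ k ih =>
      have P1 : ∀ ω, Real.sqrt (S2 g (k + 1) ω + S2 d (k + 1) ω) + 2 * Real.sqrt (S2 d k ω)
          ≤ Real.sqrt (S2 g k ω + S2 d k ω) + (Real.sqrt (S2 d (k + 1) ω)
            + Real.sqrt (S2 d k ω + g (k + 1) ω ^ 2)) := by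
        intro ω
        have e1 := S2_succ g k ω
        have e2 := S2_succ d k ω
        have hb : 0 ≤ S2 d k ω := S2_nonneg _ _ _
        have ha : 0 ≤ S2 g k ω := S2_nonneg _ _ _
        have hx : (0:ℝ) ≤ g (k + 1) ω ^ 2 := sq_nonneg _
        have hy : (0:ℝ) ≤ d (k + 1) ω ^ 2 := sq_nonneg _
        have harg : S2 g (k + 1) ω + S2 d (k + 1) ω
            = S2 g k ω + S2 d k ω + g (k + 1) ω ^ 2 + d (k + 1) ω ^ 2 := by
          rw [e1, e2]; ring
        rw [harg, e2]
        have h1 := Lsub (s := S2 g k ω + S2 d k ω) (x := g (k + 1) ω ^ 2)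
          (y := d (k + 1) ω ^ 2) (by linarith) hx hy
        have h2 := Lshift (b := S2 d k ω) (s := S2 g k ω + S2 d k ω)
          (x := g (k + 1) ω ^ 2) hb (by linarith) hx
        have h3 := Lshift (b := S2 d k ω) (s := S2 g k ω + S2 d k ω)
          (x := d (k + 1) ω ^ 2) hb (by linarith) hy
        linarith
      have hL : Integrable (fun ω => Real.sqrt (S2 g (k + 1) ω + S2 d (k + 1) ω)
          + 2 * Real.sqrt (S2 d k ω)) μ := (hIgd (k + 1)).add ((hId k).const_mul 2)
      have hR : Integrable (fun ω => Real.sqrt (S2 g k ω + S2 d k ω)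
          + (Real.sqrt (S2 d (k + 1) ω) + Real.sqrt (S2 d k ω + g (k + 1) ω ^ 2))) μ :=
        (hIgd k).add ((hId (k + 1)).add (hIφ k))
      have hInt : (∫ ω, (Real.sqrt (S2 g (k + 1) ω + S2 d (k + 1) ω)
            + 2 * Real.sqrt (S2 d k ω)) ∂μ)
          ≤ ∫ ω, (Real.sqrt (S2 g k ω + S2 d k ω) + (Real.sqrt (S2 d (k + 1) ω)
            + Real.sqrt (S2 d k ω + g (k + 1) ω ^ 2))) ∂μ := integral_mono hL hR P1
      have eL : (∫ ω, (Real.sqrt (S2 g (k + 1) ω + S2 d (k + 1) ω)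
            + 2 * Real.sqrt (S2 d k ω)) ∂μ)
          = (∫ ω, Real.sqrt (S2 g (k + 1) ω + S2 d (k + 1) ω) ∂μ)
            + ∫ ω, 2 * Real.sqrt (S2 d k ω) ∂μ :=
        integral_add (hIgd (k + 1)) ((hId k).const_mul 2)
      have eL2 : (∫ ω, 2 * Real.sqrt (S2 d k ω) ∂μ)
          = 2 * ∫ ω, Real.sqrt (S2 d k ω) ∂μ := integral_const_mul 2 _
      have eR : (∫ ω, (Real.sqrt (S2 g k ω + S2 d k ω) + (Real.sqrt (S2 d (k + 1) ω)
            + Real.sqrt (S2 d k ω + g (k + 1) ω ^ 2))) ∂μ)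
          = (∫ ω, Real.sqrt (S2 g k ω + S2 d k ω) ∂μ)
            + ∫ ω, (Real.sqrt (S2 d (k + 1) ω)
              + Real.sqrt (S2 d k ω + g (k + 1) ω ^ 2)) ∂μ :=
        integral_add (hIgd k) ((hId (k + 1)).add (hIφ k))
      have eR2 : (∫ ω, (Real.sqrt (S2 d (k + 1) ω)
            + Real.sqrt (S2 d k ω + g (k + 1) ω ^ 2)) ∂μ)
          = (∫ ω, Real.sqrt (S2 d (k + 1) ω) ∂μ)
            + ∫ ω, Real.sqrt (S2 d k ω + g (k + 1) ω ^ 2) ∂μ :=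
        integral_add (hId (k + 1)) (hIφ k)
      have ht := tangent k
      linarith [hInt, eL, eL2, eR, eR2, ht, ih]
  have hfinal : (∫ ω, Real.sqrt (S2 g n ω) ∂μ) ≤ ∫ ω, Real.sqrt (S2 g n ω + S2 d n ω) ∂μ := by
    refine integral_mono (hint_sqrt _ n (hS2m g hgm n) (fun ω => S2_nonneg _ _ _)
      (fun ω => le_add_of_nonneg_right (S2_nonneg _ _ _))) (hIgd n) (fun ω => ?_)
    exact Real.sqrt_le_sqrt (le_add_of_nonneg_right (S2_nonneg _ _ _))
  exact hfinal.trans (claim n)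

end Aux

theorem stmt_9 {Ω : Type*} {m0 : MeasurableSpace Ω} (μ : Measure Ω) [IsProbabilityMeasure μ]
    (ℱ : ℕ → MeasurableSpace Ω) (hle : ∀ k, ℱ k ≤ m0) (hmono : Monotone ℱ)
    (n : ℕ) (F : ℕ → Ω → ℂ)
    (hadapted : ∀ k, StronglyMeasurable[ℱ k] (F k))
    (hint : ∀ k, Integrable (F k) μ)
    (hmart : ∀ k, μ[F (k + 1) | ℱ k] =ᵐ[μ] F k) :
    (∫ ω, Real.sqrt (∑ k ∈ Finset.Icc 1 n,
        (μ[fun x => ‖F k x - F (k - 1) x‖ | ℱ (k - 1)]) ω ^ 2) ∂μ)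
      ≤ 2 * ∫ ω, Real.sqrt (∑ k ∈ Finset.Icc 1 n,
          ‖F k ω - F (k - 1) ω‖ ^ 2) ∂μ := by
  have hd_meas : ∀ k, StronglyMeasurable[ℱ k]
      (fun ω => ‖F k ω - F (k - 1) ω‖) := fun k =>
    continuous_norm.comp_stronglyMeasurable
      ((hadapted k).sub ((hadapted (k - 1)).mono (hmono (Nat.sub_le k 1))))
  have hd_int : ∀ k, Integrable (fun ω => ‖F k ω - F (k - 1) ω‖) μ := by
    intro k
    have h := ((hint k).sub (hint (k - 1))).norm
    simpa using h
  exact aux μ ℱ hle hmono (fun k ω => ‖F k ω - F (k - 1) ω‖) hd_meas hd_int n
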